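/- arXiv:2510.10540 — 2 statements merged into one kernel-verified Lean document; each statement's English description precedes it below -/
import Mathlib

section
/- Let K be a number field of degree d and β_K ≥ 3 an integer. Then 0 ≤ ∑_{𝔭} (ln N(𝔭))/(N(𝔭)^{β_K} − 1) ≤ d·(1/2^{β_K −1} + 1/((β_K −2)·2^{β_K −2})), where the sum ranges over the nonzero prime ideals 𝔭 of O_K. In particular the sum converges and tends to 0 exponentially fast as β_K → ∞. -/
open NumberField

section AuxPILSB

/-- Bernoulli-type bound: `m^(u+1) + (u+1) m^u ≤ (m+1)^(u+1)` for `m ≥ 1`. -/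
lemma auxPILSB_bernoulli (u : ℕ) {m : ℝ} (hm : 1 ≤ m) :
    m ^ (u+1) + ((u:ℝ)+1) * m ^ u ≤ (m+1)^(u+1) := by
  have hm0 : (0:ℝ) < m := by linarith
  have hb : 1 + ((u+1 : ℕ):ℝ) * (1/m) ≤ (1 + 1/m) ^ (u+1) :=
    one_add_mul_le_pow (le_trans (by norm_num) (by positivity : (0:ℝ) ≤ 1/m)) (u+1)
  have h2 := mul_le_mul_of_nonneg_right hb (pow_pos hm0 (u+1)).le
  rw [← mul_pow] at h2
  have h3 : (1 + 1/m) * m = m + 1 := by field_simp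
  rw [h3] at h2
  refine le_trans (le_of_eq ?_) h2
  push_cast
  field_simp
  ring

/-- The telescoping step: `(u+1)/(m+1)^(u+2) ≤ 1/m^(u+1) - 1/(m+1)^(u+1)`. -/
lemma auxPILSB_step (u : ℕ) {m : ℕ} (hm : 2 ≤ m) :
    ((u:ℝ)+1) / ((m:ℝ)+1)^(u+2) ≤ 1/(m:ℝ)^(u+1) - 1/((m:ℝ)+1)^(u+1) := by
  have hm1 : (1:ℝ) ≤ (m:ℝ) := by exact_mod_cast Nat.one_le_of_lt hm
  have hm0 : (0:ℝ) < m := by linarith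
  have hb := auxPILSB_bernoulli u hm1
  have hA : (0:ℝ) < (m:ℝ)^(u+1) := by positivity
  have hB : (0:ℝ) < ((m:ℝ)+1)^(u+1) := by positivity
  have hB2 : (0:ℝ) < ((m:ℝ)+1)^(u+2) := by positivity
  rw [div_sub_div _ _ hA.ne' hB.ne', div_le_div_iff₀ hB2 (by positivity)]
  have e1 : ((m:ℝ)+1)^(u+2) = ((m:ℝ)+1)^(u+1) * ((m:ℝ)+1) := pow_succ _ _
  have e2 : (m:ℝ)^(u+1) = (m:ℝ)^u * m := pow_succ _ _
  have hkey : ((u:ℝ)+1) * (m:ℝ)^u ≤ ((m:ℝ)+1)^(u+1) - (m:ℝ)^(u+1) := by linarith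
  have hmul := mul_le_mul_of_nonneg_right hkey hB2.le
  have hu0 : (0:ℝ) ≤ (u:ℝ)+1 := by positivity
  have hp0 : (0:ℝ) < (m:ℝ)^u := by positivity
  have h5 : ((u:ℝ)+1)*((m:ℝ)^(u+1)*((m:ℝ)+1)^(u+1)) ≤ ((u:ℝ)+1)*(m:ℝ)^u*((m:ℝ)+1)^(u+2) := by
    rw [e1, e2]
    nlinarith [mul_nonneg (mul_nonneg hu0 hp0.le) hB.le]
  nlinarith [hmul, h5]

/-- Telescoping tail estimate. -/
lemma auxPILSB_telescope (u : ℕ) (M : ℕ) (hM : 2 ≤ M) :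
    ((u:ℝ)+1) * ∑ n ∈ Finset.Icc 3 M, 1/(n:ℝ)^(u+2) ≤ 1/2^(u+1) - 1/(M:ℝ)^(u+1) := by
  induction M, hM using Nat.le_induction with
  | base =>
    rw [Finset.Icc_eq_empty (by omega)]
    norm_num
  | succ M hM ih =>
    rw [Finset.sum_Icc_succ_top (by omega : 3 ≤ M + 1)]
    have hstep := auxPILSB_step u hM
    have hcast : ((M+1 : ℕ):ℝ) = (M:ℝ)+1 := by push_cast; ring
    rw [hcast, mul_add, mul_one_div]
    linarith

/-- Sum over a finite set of naturals `≥ 2`. -/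
lemma auxPILSB_primeset_sum (u : ℕ) (Q : Finset ℕ) (hQ : ∀ q ∈ Q, 2 ≤ q) :
    ∑ q ∈ Q, 1/(q:ℝ)^(u+2) ≤ 1/2^(u+2) + 1/(((u:ℝ)+1) * 2^(u+1)) := by
  classical
  have hsplit : ∑ q ∈ Q, 1/(q:ℝ)^(u+2) ≤ 1/2^(u+2) + ∑ q ∈ Q.erase 2, 1/(q:ℝ)^(u+2) := by
    by_cases h2 : 2 ∈ Q
    · rw [← Finset.add_sum_erase _ _ h2]
      norm_num
    · rw [Finset.erase_eq_of_notMem h2]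
      have : (0:ℝ) ≤ 1/2^(u+2) := by positivity
      linarith
  set M := Q.sup id ⊔ 2 with hM
  have hM2 : 2 ≤ M := le_max_right _ _
  have hsub : Q.erase 2 ⊆ Finset.Icc 3 M := by
    intro q hq
    have hqQ := Finset.mem_of_mem_erase hq
    have hne := Finset.ne_of_mem_erase hq
    have h2q := hQ q hqQ
    refine Finset.mem_Icc.mpr ⟨by omega, ?_⟩
    exact le_trans (Finset.le_sup (f := id) hqQ) (le_max_left _ _)
  have hmono : ∑ q ∈ Q.erase 2, 1/(q:ℝ)^(u+2) ≤ ∑ n ∈ Finset.Icc 3 M, 1/(n:ℝ)^(u+2) :=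
    Finset.sum_le_sum_of_subset_of_nonneg hsub (fun n _ _ => by positivity)
  have htel := auxPILSB_telescope u M hM2
  have h3 : ∑ n ∈ Finset.Icc 3 M, 1/(n:ℝ)^(u+2) ≤ 1/(((u:ℝ)+1) * 2^(u+1)) := by
    rw [le_div_iff₀ (by positivity)]
    have hMpow : (0:ℝ) ≤ 1/(M:ℝ)^(u+1) := by positivity
    have h2p : (0:ℝ) < (2:ℝ)^(u+1) := by positivity
    have hone : (1/(2:ℝ)^(u+1)) * 2^(u+1) = 1 := by field_simp
    nlinarith [htel]
  linarith

/-- Per-term bound: `log n / (n^(u+3) - 1) ≤ 1/n^(u+2)` for `n ≥ 2`. -/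
lemma auxPILSB_term (u : ℕ) {n : ℕ} (hn : 2 ≤ n) :
    Real.log n / ((n:ℝ)^(u+3) - 1) ≤ 1/(n:ℝ)^(u+2) := by
  have hn1 : (2:ℝ) ≤ (n:ℝ) := by exact_mod_cast hn
  have hn0 : (0:ℝ) < n := by linarith
  have hlog : Real.log n ≤ (n:ℝ)/2 := by
    have h1 : Real.log (Real.sqrt n) ≤ Real.sqrt n - 1 :=
      Real.log_le_sub_one_of_pos (Real.sqrt_pos.mpr hn0)
    have h2 : Real.log (n:ℝ) = 2 * Real.log (Real.sqrt n) := by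
      rw [Real.log_sqrt hn0.le]; ring
    nlinarith [Real.sq_sqrt hn0.le, sq_nonneg (Real.sqrt (n:ℝ) - 2)]
  have hpow2 : (2:ℝ) ≤ (n:ℝ)^(u+3) := le_trans hn1 (le_self_pow₀ (by linarith) (by omega))
  have hden : (n:ℝ)^(u+3)/2 ≤ (n:ℝ)^(u+3) - 1 := by linarith
  have hd0 : (0:ℝ) < (n:ℝ)^(u+3)/2 := by positivity
  have hmain : Real.log n / ((n:ℝ)^(u+3) - 1) ≤ ((n:ℝ)/2) / ((n:ℝ)^(u+3)/2) :=
    div_le_div₀ (by positivity) hlog hd0 hden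
  refine hmain.trans (le_of_eq ?_)
  have hne : (n:ℝ) ≠ 0 := hn0.ne'
  field_simp
  ring

set_option synthInstance.maxHeartbeats 1000000 in
set_option maxHeartbeats 1000000 in
/-- The minimal prime factor of the norm of a nonzero prime ideal is a prime
belonging to the ideal. -/
lemma auxPILSB_minFac_mem (K : Type*) [Field K] [NumberField K] {P : Ideal (𝓞 K)}
    (hP : P.IsPrime) (hbot : P ≠ ⊥) :
    (Ideal.absNorm P).minFac.Prime ∧ ((Ideal.absNorm P).minFac : 𝓞 K) ∈ P := by
  haveI : P.IsMaximal := hP.isMaximal hbot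
  have hn0 : Ideal.absNorm P ≠ 0 := by simpa [Ideal.absNorm_eq_zero_iff] using hbot
  have hcard : Ideal.absNorm P = Nat.card ((𝓞 K) ⧸ P) := by
    rw [Ideal.absNorm_apply, Submodule.cardQuot_apply]
  haveI : Finite ((𝓞 K) ⧸ P) := Nat.finite_of_card_ne_zero (by rw [← hcard]; exact hn0)
  letI : Field ((𝓞 K) ⧸ P) := Ideal.Quotient.field P
  letI : Fintype ((𝓞 K) ⧸ P) := Fintype.ofFinite _
  set r := ringChar ((𝓞 K) ⧸ P) with hr
  haveI : CharP ((𝓞 K) ⧸ P) r := ringChar.charP _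
  obtain ⟨k, hrprime, hk⟩ := FiniteField.card ((𝓞 K) ⧸ P) r
  have habs : Ideal.absNorm P = r ^ (k : ℕ) := by
    rw [hcard, Nat.card_eq_fintype_card, hk]
  have hminFac : (Ideal.absNorm P).minFac = r := by
    rw [habs, Nat.Prime.pow_minFac hrprime k.ne_zero]
  have hmk : Ideal.Quotient.mk P ((r : 𝓞 K)) = 0 := by
    rw [map_natCast]
    exact CharP.cast_eq_zero _ r
  rw [hminFac]
  exact ⟨hrprime, Ideal.Quotient.eq_zero_iff_mem.mp hmk⟩

open UniqueFactorizationMonoid in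
/-- The number of prime ideals of `𝓞 K` containing a rational prime `q` is at most
the degree of `K`. -/
lemma auxPILSB_card_primes_over (K : Type*) [Field K] [NumberField K] {q : ℕ} (hq : q.Prime)
    (T : Finset (Ideal (𝓞 K))) (hT : ∀ P ∈ T, P.IsPrime ∧ P ≠ ⊥ ∧ (q : 𝓞 K) ∈ P) :
    T.card ≤ Module.finrank ℚ K := by
  classical
  set pZ : Ideal ℤ := Ideal.span {(q : ℤ)} with hpZ
  have hq0 : (q : ℤ) ≠ 0 := by exact_mod_cast hq.ne_zero
  have hpZprime : pZ.IsPrime := (Ideal.span_singleton_prime hq0).mpr (Nat.prime_iff_prime_int.mp hq)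
  have hpZbot : pZ ≠ ⊥ := by
    simp only [hpZ, ne_eq, Ideal.span_singleton_eq_bot]
    exact hq0
  haveI : pZ.IsMaximal := hpZprime.isMaximal hpZbot
  have hsum := Ideal.sum_ramification_inertia (𝓞 K) ℚ K hpZbot
  have hmap : Ideal.map (algebraMap ℤ (𝓞 K)) pZ = Ideal.span {(q : 𝓞 K)} := by
    rw [hpZ, Ideal.map_span, Set.image_singleton, map_natCast]
  have hmapbot : Ideal.map (algebraMap ℤ (𝓞 K)) pZ ≠ ⊥ := by
    rw [hmap, ne_eq, Ideal.span_singleton_eq_bot, Nat.cast_eq_zero]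
    exact hq.ne_zero
  have hsub : T ⊆ (factors (Ideal.map (algebraMap ℤ (𝓞 K)) pZ)).toFinset := by
    intro P hP
    obtain ⟨h1, h2, h3⟩ := hT P hP
    rw [Multiset.mem_toFinset, factors_eq_normalizedFactors,
      Ideal.mem_normalizedFactors_iff hmapbot]
    exact ⟨h1, by rw [hmap]; exact (Ideal.span_singleton_le_iff_mem P).mpr h3⟩
  refine (Finset.card_le_card hsub).trans (le_trans ?_ (le_of_eq hsum))
  rw [Finset.card_eq_sum_ones]
  refine Finset.sum_le_sum fun P hP => ?_
  have h1 :=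
    Ideal.Factors.ramificationIdx_ne_zero pZ ⟨P, hP⟩
  haveI := Ideal.Factors.liesOver pZ ⟨P, hP⟩
  have h2 := Ideal.inertiaDeg'_pos pZ P
  exact Nat.one_le_iff_ne_zero.mpr (Nat.mul_ne_zero h1 h2.ne')

end AuxPILSB

/-- For a number field `K` of degree `d` and an integer `β_K ≥ 3`, the sum
`∑_𝔭 (ln N(𝔭))/(N(𝔭)^{β_K} − 1)` over nonzero prime ideals of `O_K` converges, is
nonnegative, and is at most `d·(1/2^{β_K−1} + 1/((β_K−2)·2^{β_K−2}))`; in particular it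
tends to `0` exponentially fast as `β_K → ∞`. -/
theorem prime_ideal_log_sum_bound (K : Type*) [Field K] [NumberField K]
    (d : ℕ) (hd : d = Module.finrank ℚ K) (βK : ℕ) (hβ : 3 ≤ βK) :
    Summable (fun P : {P : Ideal (𝓞 K) // P.IsPrime ∧ P ≠ ⊥} =>
      Real.log (Ideal.absNorm P.1) / ((Ideal.absNorm P.1 : ℝ) ^ βK - 1)) ∧
    0 ≤ ∑' P : {P : Ideal (𝓞 K) // P.IsPrime ∧ P ≠ ⊥},
        Real.log (Ideal.absNorm P.1) / ((Ideal.absNorm P.1 : ℝ) ^ βK - 1) ∧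
    ∑' P : {P : Ideal (𝓞 K) // P.IsPrime ∧ P ≠ ⊥},
        Real.log (Ideal.absNorm P.1) / ((Ideal.absNorm P.1 : ℝ) ^ βK - 1) ≤
      (d : ℝ) * (1 / 2 ^ (βK - 1) + 1 / (((βK : ℝ) - 2) * 2 ^ (βK - 2))) := by
  classical
  obtain ⟨u, rfl⟩ : ∃ u, βK = u + 3 := ⟨βK - 3, by omega⟩
  set f : {P : Ideal (𝓞 K) // P.IsPrime ∧ P ≠ ⊥} → ℝ :=
    fun P => Real.log (Ideal.absNorm P.1) / ((Ideal.absNorm P.1 : ℝ) ^ (u+3) - 1) with hf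
  have habs : ∀ P : {P : Ideal (𝓞 K) // P.IsPrime ∧ P ≠ ⊥}, 2 ≤ Ideal.absNorm P.1 := by
    intro P
    have h0 : Ideal.absNorm P.1 ≠ 0 := by simpa [Ideal.absNorm_eq_zero_iff] using P.2.2
    have h1 : Ideal.absNorm P.1 ≠ 1 := by simpa [Ideal.absNorm_eq_one_iff] using P.2.1.ne_top
    omega
  have hf0 : ∀ P, 0 ≤ f P := by
    intro P
    have h2 : (2:ℝ) ≤ (Ideal.absNorm P.1 : ℝ) := by exact_mod_cast habs P
    have hpow : (2:ℝ) ≤ ((Ideal.absNorm P.1 : ℝ))^(u+3) :=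
      le_trans h2 (le_self_pow₀ (by linarith) (by omega))
    exact div_nonneg (Real.log_nonneg (by linarith)) (by linarith)
  set C : ℝ := (d:ℝ) * (1/2^(u+2) + 1/(((u:ℝ)+1) * 2^(u+1))) with hC
  have key : ∀ S : Finset {P : Ideal (𝓞 K) // P.IsPrime ∧ P ≠ ⊥}, ∑ P ∈ S, f P ≤ C := by
    intro S
    set c : {P : Ideal (𝓞 K) // P.IsPrime ∧ P ≠ ⊥} → ℕ :=
      fun P => (Ideal.absNorm P.1).minFac with hc
    have hterm : ∀ P ∈ S, f P ≤ 1/((c P : ℝ))^(u+2) := by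
      intro P _
      have h2 := habs P
      have hq := (auxPILSB_minFac_mem K P.2.1 P.2.2).1
      have hqle : c P ≤ Ideal.absNorm P.1 := Nat.minFac_le (by omega)
      have hc2 : (0:ℝ) < (c P : ℝ) := by exact_mod_cast hq.pos
      refine (auxPILSB_term u h2).trans ?_
      apply one_div_le_one_div_of_le (by positivity)
      exact pow_le_pow_left₀ hc2.le (by exact_mod_cast hqle) _
    calc ∑ P ∈ S, f P ≤ ∑ P ∈ S, 1/((c P : ℝ))^(u+2) := Finset.sum_le_sum hterm
      _ = ∑ q ∈ S.image c, ∑ P ∈ S.filter (fun P => c P = q), 1/((c P:ℝ))^(u+2) :=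
          (Finset.sum_fiberwise_of_maps_to (fun P hP => Finset.mem_image_of_mem c hP) _).symm
      _ ≤ ∑ q ∈ S.image c, (d:ℝ) * (1/(q:ℝ)^(u+2)) := by
          refine Finset.sum_le_sum fun q hq => ?_
          have hinner : ∑ P ∈ S.filter (fun P => c P = q), 1/((c P:ℝ))^(u+2)
               = ((S.filter (fun P => c P = q)).card : ℝ) * (1/(q:ℝ)^(u+2)) := by
            rw [Finset.sum_congr rfl (fun P hP => by rw [(Finset.mem_filter.mp hP).2]),
              Finset.sum_const, nsmul_eq_mul]
          rw [hinner]
          have hqprime : q.Prime := by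
            obtain ⟨P, hPS, rfl⟩ := Finset.mem_image.mp hq
            exact (auxPILSB_minFac_mem K P.2.1 P.2.2).1
          have hcard : (S.filter (fun P => c P = q)).card ≤ d := by
            rw [hd]
            refine le_trans (le_of_eq
              (Finset.card_image_of_injective _
                (fun a b h => Subtype.ext h : Function.Injective
                  (fun P : {P : Ideal (𝓞 K) // P.IsPrime ∧ P ≠ ⊥} => P.1))).symm)
              (auxPILSB_card_primes_over K hqprime _ ?_)
            intro I hI
            obtain ⟨P, hPmem, rfl⟩ := Finset.mem_image.mp hI
            have hcq : c P = q := (Finset.mem_filter.mp hPmem).2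
            refine ⟨P.2.1, P.2.2, ?_⟩
            have hm := (auxPILSB_minFac_mem K P.2.1 P.2.2).2
            rwa [show (Ideal.absNorm P.1).minFac = q from hcq] at hm
          exact mul_le_mul_of_nonneg_right (by exact_mod_cast hcard) (by positivity)
      _ = (d:ℝ) * ∑ q ∈ S.image c, 1/(q:ℝ)^(u+2) := by rw [Finset.mul_sum]
      _ ≤ C := by
          rw [hC]
          refine mul_le_mul_of_nonneg_left ?_ (by positivity)
          refine auxPILSB_primeset_sum u _ fun q hq => ?_
          obtain ⟨P, hPS, rfl⟩ := Finset.mem_image.mp hq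
          exact ((auxPILSB_minFac_mem K P.2.1 P.2.2).1).two_le
  have hsum : Summable f := summable_of_sum_le (fun P => hf0 P) key
  have hbound : ∑' P, f P ≤ C := hsum.tsum_le_of_sum_le key
  refine ⟨hsum, tsum_nonneg hf0, ?_⟩
  have e1 : u + 3 - 1 = u + 2 := rfl
  have e2 : u + 3 - 2 = u + 1 := rfl
  have e3 : (((u+3:ℕ)):ℝ) - 2 = (u:ℝ) + 1 := by push_cast; ring
  rw [e1, e2, e3]
  exact hbound
end

section
/- The log-volume of the n-dimensional Euclidean unit ball satisfies ln vol(B_n) = (n/2)·ln π − ln Γ(1 + n/2), and consequently lgh_ℚ(n) := (1/n)·(ln 2 − γ − ln vol(B_n)) satisfies lgh_ℚ(n) = (ln n)/2 − (ln(2πe))/2 + (ln n)/(2n) + (ln(4π) − 2γ)/(2n) + o(1/n) as n → ∞. -/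
open Filter Asymptotics MeasureTheory Real Topology

/-- The volume of the unit ball in `ℝ^n`. -/
noncomputable def unitBallVol (n : ℕ) : ℝ :=
  (volume (Metric.ball (0 : EuclideanSpace ℝ (Fin n)) 1)).toReal

/-- `lgh_ℚ(n) = (1/n)·(ln 2 − γ − ln vol(B_n))`. -/
noncomputable def lghQ (n : ℕ) : ℝ :=
  (1 / (n : ℝ)) * (Real.log 2 - Real.eulerMascheroniConstant - Real.log (unitBallVol n))



/-- Stirling error term for `log n!`. -/
noncomputable def sA (m : ℕ) : ℝ :=
  Real.log (Nat.factorial m) - ((m : ℝ) * Real.log m - m + Real.log (2 * Real.pi * m) / 2)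

lemma tendsto_sA : Tendsto sA atTop (𝓝 0) := by
  have h : Tendsto (fun m => Real.log (Stirling.stirlingSeq m) - Real.log (Real.sqrt Real.pi))
      atTop (𝓝 0) := by
    have := (Stirling.tendsto_stirlingSeq_sqrt_pi.log
      (by positivity)).sub (tendsto_const_nhds (x := Real.log (Real.sqrt Real.pi)))
    simpa using this
  refine h.congr' ?_
  filter_upwards [eventually_ge_atTop 1] with m hm
  have hm0 : (0:ℝ) < (m:ℝ) := by exact_mod_cast hm
  have hfac : (0:ℝ) < (Nat.factorial m : ℝ) := by exact_mod_cast m.factorial_pos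
  rw [Stirling.stirlingSeq, Real.log_div hfac.ne' (by positivity),
    Real.log_mul (by positivity) (by positivity), Real.log_sqrt (by positivity),
    Real.log_pow, Real.log_div hm0.ne' (Real.exp_pos 1).ne', Real.log_exp,
    Real.log_sqrt Real.pi_pos.le, Real.log_mul two_ne_zero hm0.ne', sA,
    Real.log_mul (by positivity) hm0.ne', Real.log_mul two_ne_zero Real.pi_pos.ne']
  ring

/-- Stirling error term for `log Γ`. -/
noncomputable def eE (x : ℝ) : ℝ :=
  Real.log (Real.Gamma x) -
    (x * Real.log x - x - Real.log x / 2 + Real.log (2 * Real.pi) / 2)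

lemma log_Gamma_nat (m : ℕ) (hm : 1 ≤ m) :
    Real.log (Real.Gamma m) = Real.log (Nat.factorial m) - Real.log m := by
  have hm0 : (0:ℝ) < (m:ℝ) := by exact_mod_cast hm
  have h1 : Real.Gamma ((m:ℝ) + 1) = (m:ℝ) * Real.Gamma m := Real.Gamma_add_one hm0.ne'
  have h2 : Real.Gamma ((m:ℝ) + 1) = Nat.factorial m := Real.Gamma_nat_eq_factorial m
  have hfac : (0:ℝ) < (Nat.factorial m : ℝ) := by exact_mod_cast m.factorial_pos
  have hG : Real.Gamma (m:ℝ) = (Nat.factorial m : ℝ) / m := by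
    rw [h2] at h1; field_simp; linarith
  rw [hG, Real.log_div hfac.ne' hm0.ne']

lemma eE_nat (m : ℕ) (hm : 1 ≤ m) : eE (m : ℝ) = sA m := by
  have hm0 : (0:ℝ) < (m:ℝ) := by exact_mod_cast hm
  rw [eE, sA, log_Gamma_nat m hm, Real.log_mul (by positivity) hm0.ne',
    Real.log_mul two_ne_zero Real.pi_pos.ne']
  ring

lemma eE_half (m : ℕ) (hm : 1 ≤ m) :
    eE ((m:ℝ) + 1/2) = sA (2*m) - sA m - ((m:ℝ) * Real.log (1 + (1/2)/(m:ℝ)) - 1/2) := by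
  set x : ℝ := (m:ℝ) with hxdef
  have hx : (0:ℝ) < x := by rw [hxdef]; exact_mod_cast hm
  have hG1 : Real.log (Real.Gamma x) = Real.log (Nat.factorial m) - Real.log x :=
    log_Gamma_nat m hm
  have hG2 : Real.log (Real.Gamma (2*x)) =
      Real.log (Nat.factorial (2*m)) - (Real.log 2 + Real.log x) := by
    have h := log_Gamma_nat (2*m) (by omega)
    have hc : ((2*m : ℕ) : ℝ) = 2 * x := by push_cast [hxdef]; ring
    rw [hc] at h
    rw [h, Real.log_mul two_ne_zero hx.ne']
  have hGpos : 0 < Real.Gamma x := Real.Gamma_pos_of_pos hx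
  have hGpos2 : 0 < Real.Gamma (x + 1/2) := Real.Gamma_pos_of_pos (by linarith)
  have hGpos3 : 0 < Real.Gamma (2*x) := Real.Gamma_pos_of_pos (by linarith)
  have hdup := Real.Gamma_mul_Gamma_add_half x
  have hdup' : Real.log (Real.Gamma (x + 1/2)) =
      Real.log (Real.Gamma (2*x)) + (1 - 2*x) * Real.log 2 + Real.log Real.pi / 2
        - Real.log (Real.Gamma x) := by
    have hl := congrArg Real.log hdup
    rw [Real.log_mul hGpos.ne' hGpos2.ne',
      Real.log_mul (by positivity) (by positivity),
      Real.log_mul hGpos3.ne' (by positivity),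
      Real.log_rpow two_pos, Real.log_sqrt Real.pi_pos.le] at hl
    linarith
  have hlog1 : Real.log (1 + (1/2)/x) = Real.log (x + 1/2) - Real.log x := by
    have : 1 + (1/2)/x = (x + 1/2) / x := by field_simp
    rw [this, Real.log_div (by linarith) hx.ne']
  have hsa2 : sA (2*m) = Real.log (Nat.factorial (2*m)) -
      (2*x*(Real.log 2 + Real.log x) - 2*x
        + (Real.log 2 + Real.log Real.pi + (Real.log 2 + Real.log x))/2) := by
    rw [sA]
    have hc : ((2*m : ℕ) : ℝ) = 2 * x := by push_cast [hxdef]; ring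
    rw [hc, Real.log_mul two_ne_zero hx.ne',
      Real.log_mul (by positivity) (by positivity),
      Real.log_mul two_ne_zero Real.pi_pos.ne',
      Real.log_mul two_ne_zero hx.ne']
  have hsa1 : sA m = Real.log (Nat.factorial m) -
      (x*Real.log x - x + (Real.log 2 + Real.log Real.pi + Real.log x)/2) := by
    rw [sA, Real.log_mul (by positivity) hx.ne',
      Real.log_mul two_ne_zero Real.pi_pos.ne']
  rw [eE, hdup', hG1, hG2, hlog1, hsa2, hsa1,
    Real.log_mul two_ne_zero Real.pi_pos.ne']
  ring

lemma tendsto_eE_atTop : Tendsto (fun m : ℕ => eE (m:ℝ)) atTop (𝓝 0) := by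
  refine tendsto_sA.congr' ?_
  filter_upwards [eventually_ge_atTop 1] with m hm
  exact (eE_nat m hm).symm

lemma tendsto_eE_half_atTop : Tendsto (fun m : ℕ => eE ((m:ℝ) + 1/2)) atTop (𝓝 0) := by
  have h2 : Tendsto (fun m : ℕ => sA (2*m)) atTop (𝓝 0) :=
    tendsto_sA.comp (tendsto_atTop_mono (fun n => Nat.le_mul_of_pos_left n two_pos) tendsto_id)
  have h3 : Tendsto (fun m : ℕ => (m:ℝ) * Real.log (1 + (1/2)/(m:ℝ))) atTop (𝓝 (1/2 : ℝ)) :=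
    (Real.tendsto_mul_log_one_add_div_atTop (1/2)).comp tendsto_natCast_atTop_atTop
  have h := (h2.sub tendsto_sA).sub (h3.sub (tendsto_const_nhds (x := (1/2 : ℝ))))
  rw [show (0:ℝ) - 0 - ((1:ℝ)/2 - 1/2) = 0 by ring] at h
  refine h.congr' ?_
  filter_upwards [eventually_ge_atTop 1] with m hm
  exact (eE_half m hm).symm

lemma tendsto_eE_halfnat : Tendsto (fun n : ℕ => eE ((n:ℝ)/2)) atTop (𝓝 0) := by
  rw [Metric.tendsto_atTop]
  intro ε hε
  obtain ⟨N1, h1⟩ := Metric.tendsto_atTop.mp tendsto_eE_atTop ε hε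
  obtain ⟨N2, h2⟩ := Metric.tendsto_atTop.mp tendsto_eE_half_atTop ε hε
  refine ⟨2*(N1+N2)+2, fun n hn => ?_⟩
  rcases Nat.even_or_odd n with ⟨m, hm⟩ | ⟨m, hm⟩
  · have he : (n:ℝ)/2 = (m:ℝ) := by subst hm; push_cast; ring
    rw [he]; exact h1 m (by omega)
  · have he : (n:ℝ)/2 = (m:ℝ) + 1/2 := by subst hm; push_cast; ring
    rw [he]; exact h2 m (by omega)

lemma log_unitBallVol (n : ℕ) (hn : 1 ≤ n) :
    Real.log (unitBallVol n) =
      ((n : ℝ) / 2) * Real.log Real.pi - Real.log (Real.Gamma (1 + (n : ℝ) / 2)) := by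
  have : Nonempty (Fin n) := ⟨⟨0, hn⟩⟩
  have hn0 : (0:ℝ) < (n:ℝ) := by exact_mod_cast hn
  have hΓ : 0 < Real.Gamma ((n:ℝ)/2 + 1) := Real.Gamma_pos_of_pos (by positivity)
  rw [unitBallVol, EuclideanSpace.volume_ball, Fintype.card_fin, ENNReal.ofReal_one, one_pow,
    one_mul, ENNReal.toReal_ofReal (div_nonneg (by positivity) hΓ.le),
    Real.log_div (by positivity) hΓ.ne', Real.log_pow, Real.log_sqrt Real.pi_pos.le,
    add_comm ((n:ℝ)/2) 1]
  ring

lemma key_identity (n : ℕ) (hn : 1 ≤ n) :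
    (n:ℝ) * (lghQ n - (Real.log n / 2 - Real.log (2 * Real.pi * Real.exp 1) / 2
        + Real.log n / (2 * n)
        + (Real.log (4 * Real.pi) - 2 * Real.eulerMascheroniConstant) / (2 * n)))
      = eE ((n:ℝ)/2) := by
  have hn0 : (0:ℝ) < (n:ℝ) := by exact_mod_cast hn
  have hG : Real.log (Real.Gamma (1 + (n:ℝ)/2)) =
      Real.log ((n:ℝ)/2) + Real.log (Real.Gamma ((n:ℝ)/2)) := by
    rw [add_comm, Real.Gamma_add_one (by positivity),
      Real.log_mul (by positivity) (Real.Gamma_pos_of_pos (by positivity)).ne']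
  rw [lghQ, eE, log_unitBallVol n hn, hG, Real.log_div hn0.ne' two_ne_zero,
    Real.log_mul (by positivity) (Real.exp_pos 1).ne',
    Real.log_mul two_ne_zero Real.pi_pos.ne', Real.log_exp,
    show (4:ℝ) * Real.pi = 2^2 * Real.pi by norm_num,
    Real.log_mul (by positivity) Real.pi_pos.ne', Real.log_pow]
  field_simp
  ring

/-- The log-volume of the `n`-dimensional unit ball is
`ln vol(B_n) = (n/2)·ln π − ln Γ(1 + n/2)`, and consequently
`lgh_ℚ(n) = (ln n)/2 − (ln(2πe))/2 + (ln n)/(2n) + (ln(4π) − 2γ)/(2n) + o(1/n)`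
as `n → ∞`. -/
theorem unitBallVol_log_and_lghQ_asymptotic :
    (∀ n : ℕ, 1 ≤ n →
      Real.log (unitBallVol n) =
        ((n : ℝ) / 2) * Real.log Real.pi - Real.log (Real.Gamma (1 + (n : ℝ) / 2))) ∧
    (fun n : ℕ =>
        lghQ n - (Real.log n / 2 - Real.log (2 * Real.pi * Real.exp 1) / 2
          + Real.log n / (2 * n)
          + (Real.log (4 * Real.pi) - 2 * Real.eulerMascheroniConstant) / (2 * n)))
      =o[atTop] (fun n : ℕ => 1 / (n : ℝ)) := by
  refine ⟨fun n hn => log_unitBallVol n hn, ?_⟩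
  rw [isLittleO_iff_tendsto']
  · refine tendsto_eE_halfnat.congr' ?_
    filter_upwards [eventually_ge_atTop 1] with n hn
    rw [one_div ((n:ℝ)), div_inv_eq_mul, mul_comm]
    exact (key_identity n hn).symm
  · filter_upwards [eventually_ge_atTop 1] with n hn h
    have hn0 : (0:ℝ) < (n:ℝ) := by exact_mod_cast hn
    exact absurd h (by positivity)
end
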